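/- For integers a ≥ 2 and 1 ≤ k < a/2, the bipartite tournament T(a,k) defined as follows is strongly connected but contains no hamiltonian cycle: colour classes X = R ∪ S and Y = U ∪ W with |R| = |U| = k, |S| = |W| = a − k, and arcs: ru for all r ∈ R, u ∈ U; us for all u ∈ U, s ∈ S; sw for all s ∈ S, w ∈ W; and wr for all w ∈ W, r ∈ R. -/

import Mathlib

namespace BipDigraph

variable {V : Type}

/-- Out-degree of `v` in the digraph `(V, A)`. -/
noncomputable def outdeg (A : V → V → Prop) (v : V) : ℕ := Nat.card {w : V // A v w}

/-- In-degree of `v` in the digraph `(V, A)`. -/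
noncomputable def indeg (A : V → V → Prop) (v : V) : ℕ := Nat.card {w : V // A w v}

/-- Degree of `v`: out-degree plus in-degree. -/
noncomputable def deg (A : V → V → Prop) (v : V) : ℕ := outdeg A v + indeg A v

/-- Out-degree of `v` relative to the vertex set `S`. -/
noncomputable def outdegIn (A : V → V → Prop) (S : Set V) (v : V) : ℕ := Nat.card {w : V // w ∈ S ∧ A v w}

/-- In-degree of `v` relative to the vertex set `S`. -/
noncomputable def indegIn (A : V → V → Prop) (S : Set V) (v : V) : ℕ := Nat.card {w : V // w ∈ S ∧ A w v}

/-- Degree of `v` relative to the vertex set `S`. -/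
noncomputable def degIn (A : V → V → Prop) (S : Set V) (v : V) : ℕ := outdegIn A S v + indegIn A S v

/-- The arc `(u,v)` belongs to the matching given by the function `M` on the class `X`. -/
def InM (X : Finset V) (M : V → V) (u v : V) : Prop := u ∈ X ∧ M u = v

/-- The arc `(u,v)` is an arc of the digraph not belonging to the matching. -/
def NotM (A : V → V → Prop) (X : Finset V) (M : V → V) (u v : V) : Prop :=
  A u v ∧ ¬ InM X M u v

/-- `M` is a complete matching from `X` to `Y`: every `x ∈ X` is matched along an arc
to a vertex of `Y`, and the matching arcs are independent. -/
def CompleteMatching (A : V → V → Prop) (X Y : Finset V) (M : V → V) : Prop :=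
  (∀ x ∈ X, M x ∈ Y ∧ A x (M x)) ∧ Set.InjOn M X

/-- Consecutive arcs of the list alternately satisfy `P` and `Q`, starting with `P`. -/
def Alt (P Q : V → V → Prop) : List V → Prop
  | [] => True
  | [_] => True
  | a :: b :: t => P a b ∧ Alt Q P (b :: t)

/-- `p` is an oriented path in `(V, A)` whose arcs are alternately in the matching `M`
(on `X`) and outside of it. -/
def IsCompatPath (A : V → V → Prop) (X : Finset V) (M : V → V) (p : List V) : Prop :=
  p ≠ [] ∧ p.Nodup ∧ p.Chain' A ∧
    (Alt (InM X M) (NotM A X M) p ∨ Alt (NotM A X M) (InM X M) p)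

/-- An `M`-compatible oriented path from `u` to `v`. -/
def IsCompatPathFromTo (A : V → V → Prop) (X : Finset V) (M : V → V)
    (p : List V) (u v : V) : Prop :=
  IsCompatPath A X M p ∧ p.head? = some u ∧ p.getLast? = some v

/-- `p` lists the vertices of an oriented cycle of `(V, A)` in cyclic order;
its length (number of arcs = number of vertices) is `p.length`. -/
def IsCycle (A : V → V → Prop) (p : List V) : Prop :=
  2 ≤ p.length ∧ p.Nodup ∧ ∃ u, p.head? = some u ∧ List.Chain' A (p ++ [u])

/-- `p` is an oriented cycle whose arcs are alternately in the matching `M` (on `X`)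
and outside of it. -/
def IsCompatCycle (A : V → V → Prop) (X : Finset V) (M : V → V) (p : List V) : Prop :=
  2 ≤ p.length ∧ p.Nodup ∧ ∃ u, p.head? = some u ∧ List.Chain' A (p ++ [u]) ∧
    (Alt (InM X M) (NotM A X M) (p ++ [u]) ∨ Alt (NotM A X M) (InM X M) (p ++ [u]))

/-- The digraph `(V, A)` contains an oriented cycle of length `n`. -/
def HasCycleOfLength (A : V → V → Prop) (n : ℕ) : Prop :=
  ∃ p : List V, IsCycle A p ∧ p.length = n

/-- `(V, A)` is a balanced bipartite digraph with colour classes `X`, `Y` of cardinality `a`. -/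
def BalancedBipartite (A : V → V → Prop) (X Y : Finset V) (a : ℕ) : Prop :=
  X.card = a ∧ Y.card = a ∧ Disjoint X Y ∧ (∀ v : V, v ∈ X ∨ v ∈ Y) ∧
    ∀ u v : V, A u v → (u ∈ X ∧ v ∈ Y) ∨ (u ∈ Y ∧ v ∈ X)

/-- Condition (M): `d(u) + d(v) ≥ 3a + 1` for every pair of distinct vertices `u, v`
with no arc between them in either direction. -/
def CondM (A : V → V → Prop) (a : ℕ) : Prop :=
  ∀ u v : V, u ≠ v → ¬ A u v → ¬ A v u → 3 * a + 1 ≤ deg A u + deg A v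

/-- Condition (A): `d(x') + d(y') + d(x'') + d(y'') ≥ 6a + 2` for all pairwise distinct
`x', x'' ∈ X`, `y', y'' ∈ Y` joined by `M`-compatible paths from `x'` to `y'` and from
`x''` to `y''`. -/
def CondA (A : V → V → Prop) (X Y : Finset V) (M : V → V) (a : ℕ) : Prop :=
  ∀ x' x'' y' y'' : V, x' ∈ X → x'' ∈ X → y' ∈ Y → y'' ∈ Y → x' ≠ x'' → y' ≠ y'' →
    (∃ p, IsCompatPathFromTo A X M p x' y') → (∃ p, IsCompatPathFromTo A X M p x'' y'') →
    6 * a + 2 ≤ deg A x' + deg A y' + deg A x'' + deg A y''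

/-- An `M`-compatible cycle all of whose vertices lie in `S`. -/
def IsCompatCycleIn (A : V → V → Prop) (X : Finset V) (M : V → V) (S : Set V)
    (p : List V) : Prop :=
  IsCompatCycle A X M p ∧ ∀ v ∈ p, v ∈ S

/-- An `M`-compatible path from `u` to `v` all of whose vertices lie in `S`. -/
def IsCompatPathFromToIn (A : V → V → Prop) (X : Finset V) (M : V → V) (S : Set V)
    (p : List V) (u v : V) : Prop :=
  IsCompatPathFromTo A X M p u v ∧ ∀ w ∈ p, w ∈ S

/-- The digraph `(V, A)` is strongly connected. -/
def StronglyConnected (A : V → V → Prop) : Prop :=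
  ∀ u v : V, u ≠ v →
    ∃ p : List V, p.Chain' A ∧ p.head? = some u ∧ p.getLast? = some v

/-- for `a ≥ 2` and `1 ≤ k < a/2`, the bipartite tournament `T(a,k)` with
classes `X = R ∪ S`, `Y = U ∪ W` (`|R| = |U| = k`, `|S| = |W| = a - k`) and arcs `ru`,
`us`, `sw`, `wr` is strongly connected but contains no hamiltonian cycle. -/
theorem stmt12 (a k : ℕ) (ha : 2 ≤ a) (hk1 : 1 ≤ k) (hk2 : 2 * k < a)
    {V : Type} [Fintype V] [DecidableEq V]
    (R S U W : Finset V)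
    (hR : R.card = k) (hS : S.card = a - k) (hU : U.card = k) (hW : W.card = a - k)
    (hRS : Disjoint R S) (hUW : Disjoint U W) (hXY : Disjoint (R ∪ S) (U ∪ W))
    (hcover : ∀ v : V, v ∈ R ∪ S ∪ U ∪ W)
    (A : V → V → Prop)
    (hA : ∀ u v : V, A u v ↔
      (u ∈ R ∧ v ∈ U) ∨ (u ∈ U ∧ v ∈ S) ∨ (u ∈ S ∧ v ∈ W) ∨ (u ∈ W ∧ v ∈ R)) :
    StronglyConnected A ∧ ¬ HasCycleOfLength A (2 * a) := by
  constructor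
  · -- strong connectivity
    have hkpos : 0 < k := hk1
    have hak : 0 < a - k := by omega
    obtain ⟨r0, hr0⟩ := Finset.card_pos.mp (by rw [hR]; omega : 0 < R.card)
    obtain ⟨s0, hs0⟩ := Finset.card_pos.mp (by rw [hS]; omega : 0 < S.card)
    obtain ⟨u0, hu0⟩ := Finset.card_pos.mp (by rw [hU]; omega : 0 < U.card)
    obtain ⟨w0, hw0⟩ := Finset.card_pos.mp (by rw [hW]; omega : 0 < W.card)
    have aRU : ∀ x ∈ R, ∀ y ∈ U, A x y := fun x hx y hy => (hA x y).2 (Or.inl ⟨hx, hy⟩)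
    have aUS : ∀ x ∈ U, ∀ y ∈ S, A x y := fun x hx y hy => (hA x y).2 (Or.inr (Or.inl ⟨hx, hy⟩))
    have aSW : ∀ x ∈ S, ∀ y ∈ W, A x y := fun x hx y hy => (hA x y).2 (Or.inr (Or.inr (Or.inl ⟨hx, hy⟩)))
    have aWR : ∀ x ∈ W, ∀ y ∈ R, A x y := fun x hx y hy => (hA x y).2 (Or.inr (Or.inr (Or.inr ⟨hx, hy⟩)))
    have hmem : ∀ x : V, x ∈ R ∨ x ∈ S ∨ x ∈ U ∨ x ∈ W := by
      intro x
      have := hcover x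
      simp only [Finset.mem_union] at this
      tauto
    intro u v huv
    obtain hu | hu | hu | hu := hmem u <;> obtain hv | hv | hv | hv := hmem v
    · exact ⟨[u, u0, s0, w0, v], by
        simp only [List.Chain', List.isChain_cons_cons, List.isChain_singleton, and_true]
        exact ⟨aRU u hu u0 hu0, aUS u0 hu0 s0 hs0, aSW s0 hs0 w0 hw0, aWR w0 hw0 v hv⟩, rfl, rfl⟩
    · exact ⟨[u, u0, v], by
        simp only [List.Chain', List.isChain_cons_cons, List.isChain_singleton, and_true]
        exact ⟨aRU u hu u0 hu0, aUS u0 hu0 v hv⟩, rfl, rfl⟩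
    · exact ⟨[u, v], by
        simp only [List.Chain', List.isChain_cons_cons, List.isChain_singleton, and_true]
        exact aRU u hu v hv, rfl, rfl⟩
    · exact ⟨[u, u0, s0, v], by
        simp only [List.Chain', List.isChain_cons_cons, List.isChain_singleton, and_true]
        exact ⟨aRU u hu u0 hu0, aUS u0 hu0 s0 hs0, aSW s0 hs0 v hv⟩, rfl, rfl⟩
    · exact ⟨[u, w0, v], by
        simp only [List.Chain', List.isChain_cons_cons, List.isChain_singleton, and_true]
        exact ⟨aSW u hu w0 hw0, aWR w0 hw0 v hv⟩, rfl, rfl⟩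
    · exact ⟨[u, w0, r0, u0, v], by
        simp only [List.Chain', List.isChain_cons_cons, List.isChain_singleton, and_true]
        exact ⟨aSW u hu w0 hw0, aWR w0 hw0 r0 hr0, aRU r0 hr0 u0 hu0, aUS u0 hu0 v hv⟩, rfl, rfl⟩
    · exact ⟨[u, w0, r0, v], by
        simp only [List.Chain', List.isChain_cons_cons, List.isChain_singleton, and_true]
        exact ⟨aSW u hu w0 hw0, aWR w0 hw0 r0 hr0, aRU r0 hr0 v hv⟩, rfl, rfl⟩
    · exact ⟨[u, v], by
        simp only [List.Chain', List.isChain_cons_cons, List.isChain_singleton, and_true]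
        exact aSW u hu v hv, rfl, rfl⟩
    · exact ⟨[u, s0, w0, v], by
        simp only [List.Chain', List.isChain_cons_cons, List.isChain_singleton, and_true]
        exact ⟨aUS u hu s0 hs0, aSW s0 hs0 w0 hw0, aWR w0 hw0 v hv⟩, rfl, rfl⟩
    · exact ⟨[u, v], by
        simp only [List.Chain', List.isChain_cons_cons, List.isChain_singleton, and_true]
        exact aUS u hu v hv, rfl, rfl⟩
    · exact ⟨[u, s0, w0, r0, v], by
        simp only [List.Chain', List.isChain_cons_cons, List.isChain_singleton, and_true]
        exact ⟨aUS u hu s0 hs0, aSW s0 hs0 w0 hw0, aWR w0 hw0 r0 hr0, aRU r0 hr0 v hv⟩, rfl, rfl⟩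
    · exact ⟨[u, s0, v], by
        simp only [List.Chain', List.isChain_cons_cons, List.isChain_singleton, and_true]
        exact ⟨aUS u hu s0 hs0, aSW s0 hs0 v hv⟩, rfl, rfl⟩
    · exact ⟨[u, v], by
        simp only [List.Chain', List.isChain_cons_cons, List.isChain_singleton, and_true]
        exact aWR u hu v hv, rfl, rfl⟩
    · exact ⟨[u, r0, u0, v], by
        simp only [List.Chain', List.isChain_cons_cons, List.isChain_singleton, and_true]
        exact ⟨aWR u hu r0 hr0, aRU r0 hr0 u0 hu0, aUS u0 hu0 v hv⟩, rfl, rfl⟩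
    · exact ⟨[u, r0, v], by
        simp only [List.Chain', List.isChain_cons_cons, List.isChain_singleton, and_true]
        exact ⟨aWR u hu r0 hr0, aRU r0 hr0 v hv⟩, rfl, rfl⟩
    · exact ⟨[u, r0, u0, s0, v], by
        simp only [List.Chain', List.isChain_cons_cons, List.isChain_singleton, and_true]
        exact ⟨aWR u hu r0 hr0, aRU r0 hr0 u0 hu0, aUS u0 hu0 s0 hs0, aSW s0 hs0 v hv⟩, rfl, rfl⟩
  · -- no hamiltonian cycle
    rintro ⟨p, ⟨hlen2, hnodup, c0, hhead, hchain⟩, hplen⟩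
    have hXYl := Finset.disjoint_union_right.mp hXY
    have d1 : Disjoint (R ∪ S) U := hXYl.1
    have d2 : Disjoint (R ∪ S ∪ U) W := Finset.disjoint_union_left.mpr ⟨hXYl.2, hUW⟩
    have hcardV : Fintype.card V = 2 * a := by
      have huniv : R ∪ S ∪ U ∪ W = (Finset.univ : Finset V) :=
        Finset.eq_univ_iff_forall.mpr hcover
      have := Finset.card_univ (α := V)
      rw [← huniv, Finset.card_union_of_disjoint d2, Finset.card_union_of_disjoint d1,
        Finset.card_union_of_disjoint hRS, hR, hS, hU, hW] at this
      omega
    have hall : ∀ v : V, v ∈ p := by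
      have : p.toFinset = Finset.univ :=
        Finset.eq_univ_of_card _ (by rw [List.toFinset_card_of_nodup hnodup, hplen, hcardV])
      exact fun v => List.mem_toFinset.mp (this ▸ Finset.mem_univ v)
    set n := p.length with hn'
    have hn : 0 < n := by omega
    have hpne : p ≠ [] := List.ne_nil_of_length_pos hn
    have hc0 : c0 = p.get ⟨0, hn⟩ := by
      rw [List.head?_eq_head hpne] at hhead
      rw [List.get_mk_zero]
      exact (Option.some_injective _ hhead).symm
    set g : Fin n → V := p.get with hg'
    have ginj : Function.Injective g := List.nodup_iff_injective_get.mp hnodup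
    have hget : ∀ i : Fin n, A (g i) (g ⟨(i.1 + 1) % n, Nat.mod_lt _ hn⟩) := by
      intro i
      have hq := List.isChain_iff_getElem.mp hchain i.1 (by
        simp only [List.length_append, List.length_singleton]; omega)
      have e1 : (p ++ [c0]).get ⟨i.1, by simp; omega⟩ = g i := by
        show (p ++ [c0])[i.1]'_ = _
        rw [List.getElem_append_left i.isLt]
        rfl
      rcases Nat.lt_or_ge (i.1 + 1) n with h | h
      · have e2 : (p ++ [c0]).get ⟨i.1 + 1, by simp only [List.length_append, List.length_singleton]; omega⟩ = g ⟨(i.1 + 1) % n, Nat.mod_lt _ hn⟩ := by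
          show (p ++ [c0])[i.1 + 1]'_ = _
          rw [List.getElem_append_left h]
          simp only [hg', Nat.mod_eq_of_lt h]
          try rfl
        simp only [List.get_eq_getElem] at e1 e2
        rw [e1, e2] at hq
        exact hq
      · have hin : i.1 + 1 = n := by omega
        have e2 : (p ++ [c0]).get ⟨i.1 + 1, by simp only [List.length_append, List.length_singleton]; omega⟩ = g ⟨(i.1 + 1) % n, Nat.mod_lt _ hn⟩ := by
          show (p ++ [c0])[i.1 + 1]'_ = _
          rw [List.getElem_concat_length hin, hc0]
          simp only [hg', hin, Nat.mod_self]
          try rfl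
        simp only [List.get_eq_getElem] at e1 e2
        rw [e1, e2] at hq
        exact hq
    set f : Fin n → Fin n := fun i => ⟨(i.1 + 1) % n, Nat.mod_lt _ hn⟩ with hf'
    have finj : Function.Injective f := by
      intro i j hij
      have hiv : ((i.1 + 1) % n) = ((j.1 + 1) % n) := congrArg Fin.val hij
      have hi := i.isLt; have hj := j.isLt
      have mi : (i.1 + 1) % n = if i.1 + 1 = n then 0 else i.1 + 1 := by
        split
        · simp [*]
        · exact Nat.mod_eq_of_lt (by omega)
      have mj : (j.1 + 1) % n = if j.1 + 1 = n then 0 else j.1 + 1 := by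
        split
        · simp [*]
        · exact Nat.mod_eq_of_lt (by omega)
      rw [mi, mj] at hiv
      apply Fin.ext
      split at hiv <;> split at hiv <;> omega
    -- membership facts
    have hmemW : ∀ x ∈ W, x ∉ R ∧ x ∉ S ∧ x ∉ U := by
      intro x hx
      refine ⟨?_, ?_, Finset.disjoint_right.mp hUW hx⟩
      · exact fun h => Finset.disjoint_left.mp hXY (Finset.mem_union_left _ h)
          (Finset.mem_union_right _ hx)
      · exact fun h => Finset.disjoint_left.mp hXY (Finset.mem_union_right _ h)
          (Finset.mem_union_right _ hx)
    have step : ∀ i : Fin n, g i ∈ W → g (f i) ∈ R := by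
      intro i hi
      have := (hA _ _).1 (hget i)
      obtain ⟨h1, _⟩ | ⟨h1, _⟩ | ⟨h1, _⟩ | ⟨_, h2⟩ := this
      · exact absurd h1 (hmemW _ hi).1
      · exact absurd h1 (hmemW _ hi).2.2
      · exact absurd h1 (hmemW _ hi).2.1
      · exact h2
    classical
    set TW : Finset (Fin n) := Finset.univ.filter (fun i => g i ∈ W) with hTW'
    set TR : Finset (Fin n) := Finset.univ.filter (fun i => g i ∈ R) with hTR'
    have hWcard : W.card = TW.card := by
      have himg : TW.image g = W := by
        ext w
        simp only [Finset.mem_image, hTW', Finset.mem_filter, Finset.mem_univ, true_and]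
        constructor
        · rintro ⟨i, hi, rfl⟩; exact hi
        · intro hw
          obtain ⟨i, hi⟩ := List.mem_iff_get.mp (hall w)
          exact ⟨i, show p.get i ∈ W from hi ▸ hw, hi⟩
      rw [← himg, Finset.card_image_of_injective _ ginj]
    have hsub : TW.image f ⊆ TR := by
      intro j hj
      obtain ⟨i, hi, rfl⟩ := Finset.mem_image.mp hj
      simp only [hTW', Finset.mem_filter, Finset.mem_univ, true_and] at hi
      simp only [hTR', Finset.mem_filter, Finset.mem_univ, true_and]
      exact step i hi
    have hTRcard : TR.card ≤ R.card := by
      apply Finset.card_le_card_of_injOn g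
      · intro i hi
        simpa only [hTR', Finset.mem_coe, Finset.mem_filter, Finset.mem_univ, true_and] using hi
      · exact ginj.injOn
    have : W.card ≤ R.card := by
      calc W.card = TW.card := hWcard
        _ = (TW.image f).card := (Finset.card_image_of_injective _ finj).symm
        _ ≤ TR.card := Finset.card_le_card hsub
        _ ≤ R.card := hTRcard
    rw [hW, hR] at this
    omega

end BipDigraph
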